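/- Let G be a κ-deletion-minimal graph with respect to total coloring. Suppose u and v are adjacent with deg_G(v) ≤ ⌊(κ−1)/2⌋ and deg_G(u) + deg_G(v) ≤ κ + 1. If the edge uv lies in a triangle uvw, then deg_G(w) = κ − 1. -/

import Mathlib

open SimpleGraph

variable {V : Type*}

/-- The degree of a vertex, defined via the cardinality of its neighbor set. -/
noncomputable def deg (G : SimpleGraph V) (v : V) : ℕ := (G.neighborSet v).ncard

/-- The maximum degree of a graph. -/
noncomputable def maxDeg (G : SimpleGraph V) : ℕ := ⨆ v, deg G v

/-- `fv` colors the vertices and `fe` colors the edges; together they form a total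
coloring: adjacent vertices get distinct colors, distinct edges sharing a vertex get
distinct colors, and a vertex gets a color distinct from every edge incident to it. -/
def IsTotalColoring (G : SimpleGraph V) {α : Type*} (fv : V → α) (fe : Sym2 V → α) : Prop :=
  (∀ u v : V, G.Adj u v → fv u ≠ fv v) ∧
  (∀ e₁ e₂ : Sym2 V, e₁ ∈ G.edgeSet → e₂ ∈ G.edgeSet → e₁ ≠ e₂ →
      (∃ w : V, w ∈ e₁ ∧ w ∈ e₂) → fe e₁ ≠ fe e₂) ∧
  (∀ (v : V) (e : Sym2 V), e ∈ G.edgeSet → v ∈ e → fv v ≠ fe e)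

/-- `G` has a total coloring with `n` colors. -/
def HasTotalColoring (G : SimpleGraph V) (n : ℕ) : Prop :=
  ∃ (fv : V → Fin n) (fe : Sym2 V → Fin n), IsTotalColoring G fv fe

/-- The total chromatic number of `G`. -/
noncomputable def totalChromaticNumber (G : SimpleGraph V) : ℕ :=
  sInf {n | HasTotalColoring G n}

/-- A `κ`-deletion-minimal graph: maximum degree at most `κ - 1`, total chromatic
number greater than `κ`, but every proper subgraph has total chromatic number at most `κ`. -/
def DeletionMinimal (κ : ℕ) (G : SimpleGraph V) : Prop :=
  (∀ v : V, deg G v ≤ κ - 1) ∧ κ < totalChromaticNumber G ∧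
  ∀ H : SimpleGraph V, H < G → totalChromaticNumber H ≤ κ

/- ----------------- auxiliary lemmas ----------------- -/

lemma hasTotalColoring_mono {G : SimpleGraph V} {m n : ℕ} (h : m ≤ n)
    (hm : HasTotalColoring G m) : HasTotalColoring G n := by
  obtain ⟨fv, fe, h1, h2, h3⟩ := hm
  refine ⟨Fin.castLE h ∘ fv, Fin.castLE h ∘ fe, ?_, ?_, ?_⟩
  · intro a b hab hEq
    exact h1 a b hab (Fin.castLE_injective h hEq)
  · intro e₁ e₂ h₁ h₂ hne hsh hEq
    exact h2 e₁ e₂ h₁ h₂ hne hsh (Fin.castLE_injective h hEq)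
  · intro x e he hx hEq
    exact h3 x e he hx (Fin.castLE_injective h hEq)

lemma exists_hasTotalColoring [Fintype V] (G : SimpleGraph V) :
    ∃ n, HasTotalColoring G n := by
  classical
  refine ⟨Fintype.card (V ⊕ Sym2 V), ?_⟩
  let e := Fintype.equivFin (V ⊕ Sym2 V)
  refine ⟨fun x => e (Sum.inl x), fun s => e (Sum.inr s), ?_, ?_, ?_⟩
  · intro a b hab hEq
    exact hab.ne (Sum.inl.inj (e.injective hEq))
  · intro e₁ e₂ _ _ hne _ hEq
    exact hne (Sum.inr.inj (e.injective hEq))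
  · intro x s _ _ hEq
    exact Sum.inl_ne_inr (e.injective hEq)

lemma pick_color {κ : ℕ} (s : Finset (Fin κ)) (h : s.card < κ) : ∃ c, c ∉ s := by
  by_contra hc
  push_neg at hc
  have : s = Finset.univ := Finset.eq_univ_iff_forall.mpr hc
  rw [this, Finset.card_univ, Fintype.card_fin] at h
  omega

/-- Key extension lemma: given a total coloring of `G - uv`, recolor the vertex `v`
to `cv`, recolor the edge `e₀` to `b`, and color `uv` with `ce`; if all local
compatibility conditions hold, this yields a total coloring of `G`. -/
lemma key_extend {κ : ℕ} (G : SimpleGraph V) (u v : V)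
    (huv : G.Adj u v) (fv : V → Fin κ) (fe : Sym2 V → Fin κ)
    (h : IsTotalColoring (G.deleteEdges {s(u,v)}) fv fe)
    (e₀ : Sym2 V) (he₀ : e₀ ∈ G.edgeSet) (hne₀ : e₀ ≠ s(u,v))
    (b ce cv : Fin κ)
    (Hb_e : ∀ e ∈ G.edgeSet, e ≠ s(u,v) → e ≠ e₀ → (∃ x, x ∈ e ∧ x ∈ e₀) → b ≠ fe e)
    (Hb_v : ∀ x ∈ e₀, x ≠ v → fv x ≠ b)
    (Hb_cv : v ∈ e₀ → cv ≠ b)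
    (Hb_ce : b ≠ ce)
    (Hce_e : ∀ e ∈ G.edgeSet, e ≠ s(u,v) → e ≠ e₀ → (u ∈ e ∨ v ∈ e) → ce ≠ fe e)
    (Hce_u : ce ≠ fv u)
    (Hce_cv : ce ≠ cv)
    (Hcv_nb : ∀ x, G.Adj v x → cv ≠ fv x)
    (Hcv_e : ∀ e ∈ G.edgeSet, v ∈ e → e ≠ s(u,v) → e ≠ e₀ → cv ≠ fe e) :
    HasTotalColoring G κ := by
  classical
  have hG'mem : ∀ e ∈ G.edgeSet, e ≠ s(u,v) → e ∈ (G.deleteEdges {s(u,v)}).edgeSet := by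
    intro e he hne
    rw [edgeSet_deleteEdges]
    exact ⟨he, by simpa using hne⟩
  refine ⟨Function.update fv v cv,
    Function.update (Function.update fe e₀ b) s(u,v) ce, ?_, ?_, ?_⟩
  · -- vertex-vertex
    intro x y hxy
    by_cases hx : x = v
    · rw [hx] at hxy
      rw [hx, Function.update_self, Function.update_of_ne hxy.ne']
      exact Hcv_nb y hxy
    · by_cases hy : y = v
      · rw [hy] at hxy
        rw [hy, Function.update_self, Function.update_of_ne hx]
        exact fun hEq => Hcv_nb x hxy.symm hEq.symm
      · rw [Function.update_of_ne hx, Function.update_of_ne hy]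
        refine h.1 x y ?_
        rw [deleteEdges_adj]
        refine ⟨hxy, ?_⟩
        intro hmem
        rw [Set.mem_singleton_iff] at hmem
        have hvm : v ∈ s(x,y) := by rw [hmem]; exact Sym2.mem_iff.mpr (Or.inr rfl)
        rcases Sym2.mem_iff.mp hvm with h' | h'
        · exact hx h'.symm
        · exact hy h'.symm
  · -- edge-edge
    intro e₁ e₂ h₁ h₂ hne hsh
    obtain ⟨x, hx1, hx2⟩ := hsh
    by_cases c1 : e₁ = s(u,v)
    · subst c1
      rw [Function.update_self, Function.update_of_ne (Ne.symm hne)]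
      by_cases c2 : e₂ = e₀
      · subst c2
        rw [Function.update_self]
        exact Hb_ce.symm
      · rw [Function.update_of_ne c2]
        refine Hce_e e₂ h₂ (Ne.symm hne) c2 ?_
        rcases Sym2.mem_iff.mp hx1 with h' | h'
        · exact Or.inl (h' ▸ hx2)
        · exact Or.inr (h' ▸ hx2)
    · rw [Function.update_of_ne c1]
      by_cases c3 : e₁ = e₀
      · subst c3
        rw [Function.update_self]
        by_cases c2 : e₂ = s(u,v)
        · subst c2
          rw [Function.update_self]
          exact Hb_ce
        · rw [Function.update_of_ne c2]
          by_cases c4 : e₂ = e₁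
          · exact absurd c4.symm hne
          · rw [Function.update_of_ne c4]
            exact Hb_e e₂ h₂ c2 c4 ⟨x, hx2, hx1⟩
      · rw [Function.update_of_ne c3]
        by_cases c2 : e₂ = s(u,v)
        · subst c2
          rw [Function.update_self]
          refine (Hce_e e₁ h₁ c1 c3 ?_).symm
          rcases Sym2.mem_iff.mp hx2 with h' | h'
          · exact Or.inl (h' ▸ hx1)
          · exact Or.inr (h' ▸ hx1)
        · rw [Function.update_of_ne c2]
          by_cases c4 : e₂ = e₀
          · subst c4
            rw [Function.update_self]
            exact (Hb_e e₁ h₁ c1 c3 ⟨x, hx1, hx2⟩).symm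
          · rw [Function.update_of_ne c4]
            exact h.2.1 e₁ e₂ (hG'mem e₁ h₁ c1) (hG'mem e₂ h₂ c2) hne ⟨x, hx1, hx2⟩
  · -- vertex-edge
    intro x e he hx
    by_cases hxv : x = v
    · rw [hxv] at hx
      rw [hxv, Function.update_self]
      by_cases c1 : e = s(u,v)
      · rw [c1, Function.update_self]
        exact Hce_cv.symm
      · rw [Function.update_of_ne c1]
        by_cases c2 : e = e₀
        · rw [c2] at hx
          rw [c2, Function.update_self]
          exact Hb_cv hx
        · rw [Function.update_of_ne c2]
          exact Hcv_e e he hx c1 c2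
    · rw [Function.update_of_ne hxv]
      by_cases c1 : e = s(u,v)
      · rw [c1] at hx
        rw [c1, Function.update_self]
        rcases Sym2.mem_iff.mp hx with h' | h'
        · rw [h']
          exact fun hEq => Hce_u hEq.symm
        · exact absurd h' hxv
      · rw [Function.update_of_ne c1]
        by_cases c2 : e = e₀
        · rw [c2] at hx
          rw [c2, Function.update_self]
          exact Hb_v x hx hxv
        · rw [Function.update_of_ne c2]
          exact h.2.2 x e (hG'mem e he c1) hx

/-- in a κ-deletion-minimal graph, if `u, v` are adjacent with
`deg v ≤ ⌊(κ-1)/2⌋` and `deg u + deg v ≤ κ + 1`, and `uv` lies in a triangle `uvw`,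
then `deg w = κ - 1`. -/
theorem stmt_8 {V : Type*} [Fintype V] (κ : ℕ) (G : SimpleGraph V)
    (hG : DeletionMinimal κ G) (u v w : V)
    (huv : G.Adj u v) (hvw : G.Adj v w) (huw : G.Adj u w)
    (hv : deg G v ≤ (κ - 1) / 2) (hsum : deg G u + deg G v ≤ κ + 1) :
    deg G w = κ - 1 := by
  classical
  obtain ⟨hmax, hχ, hmin⟩ := hG
  by_contra hnew
  -- translate degrees to neighborFinset cardinalities
  have hnd : ∀ x : V, (G.neighborFinset x).card = deg G x := by
    intro x
    have hcoe : ((G.neighborFinset x : Finset V) : Set V) = G.neighborSet x := by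
      ext y; simp
    rw [deg, ← Set.ncard_coe_finset, hcoe]
  have hvu : v ∈ G.neighborFinset u := by rw [mem_neighborFinset]; exact huv
  have huNv : u ∈ G.neighborFinset v := by rw [mem_neighborFinset]; exact huv.symm
  have hwNv : w ∈ G.neighborFinset v := by rw [mem_neighborFinset]; exact hvw
  have hdu1 : 1 ≤ deg G u := by
    rw [← hnd]; exact Finset.card_pos.mpr ⟨v, hvu⟩
  have hdv2 : 2 ≤ deg G v := by
    rw [← hnd]
    have hsub : ({u, w} : Finset V) ⊆ G.neighborFinset v := by
      intro x hx
      rcases Finset.mem_insert.mp hx with rfl | hx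
      · exact huNv
      · rw [Finset.mem_singleton] at hx; subst hx; exact hwNv
    calc 2 = ({u, w} : Finset V).card := (Finset.card_pair huw.ne).symm
      _ ≤ _ := Finset.card_le_card hsub
  have h2dv : deg G v * 2 ≤ κ - 1 := (Nat.le_div_iff_mul_le two_pos).mp hv
  have hκ5 : 5 ≤ κ := by omega
  have hdw : deg G w ≤ κ - 2 := by
    have := hmax w
    omega
  -- the coloring of G - uv
  have hlt : G.deleteEdges {s(u,v)} < G := by
    refine lt_of_le_of_ne (G.deleteEdges_le _) ?_
    intro hEq
    have hadj : (G.deleteEdges {s(u,v)}).Adj u v := by rw [hEq]; exact huv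
    rw [deleteEdges_adj] at hadj
    exact hadj.2 rfl
  have hcolG' : HasTotalColoring (G.deleteEdges {s(u,v)}) κ := by
    obtain ⟨n₀, hn₀⟩ := exists_hasTotalColoring (G.deleteEdges {s(u,v)})
    have hmemset : n₀ ∈ {n | HasTotalColoring (G.deleteEdges {s(u,v)}) n} := hn₀
    have h2 : sInf {n | HasTotalColoring (G.deleteEdges {s(u,v)}) n} ∈
        {n | HasTotalColoring (G.deleteEdges {s(u,v)}) n} := Nat.sInf_mem ⟨n₀, hmemset⟩
    exact hasTotalColoring_mono (hmin _ hlt) h2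
  obtain ⟨fv, fe, hcol⟩ := hcolG'
  have hnot : ¬ HasTotalColoring G κ := fun hc =>
    absurd hχ (not_lt.mpr (Nat.sInf_le hc))
  have hG'mem : ∀ e ∈ G.edgeSet, e ≠ s(u,v) → e ∈ (G.deleteEdges {s(u,v)}).edgeSet := by
    intro e he hne
    rw [edgeSet_deleteEdges]
    exact ⟨he, by simpa using hne⟩
  -- color sets
  set Au : Finset (Fin κ) := ((G.neighborFinset u).erase v).image (fun y => fe s(u,y)) with hAudef
  set Av : Finset (Fin κ) := ((G.neighborFinset v).erase u).image (fun y => fe s(v,y)) with hAvdef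
  set Aw : Finset (Fin κ) := (G.neighborFinset w).image (fun y => fe s(w,y)) with hAwdef
  have edge_form : ∀ (x : V) (e : Sym2 V), e ∈ G.edgeSet → x ∈ e →
      ∃ y, G.Adj x y ∧ e = s(x,y) := by
    intro x e
    induction e with
    | _ a b =>
      intro he hx
      rcases Sym2.mem_iff.mp hx with rfl | rfl
      · exact ⟨b, he, rfl⟩
      · exact ⟨a, (G.mem_edgeSet.mp he).symm, Sym2.eq_swap⟩
  have hmemAu : ∀ e ∈ G.edgeSet, u ∈ e → e ≠ s(u,v) → fe e ∈ Au := by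
    intro e he hue hne
    obtain ⟨y, hy, rfl⟩ := edge_form u e he hue
    have hyv : y ≠ v := by rintro rfl; exact hne rfl
    exact Finset.mem_image_of_mem _
      (Finset.mem_erase.mpr ⟨hyv, (mem_neighborFinset _ _ _).mpr hy⟩)
  have hmemAv : ∀ e ∈ G.edgeSet, v ∈ e → e ≠ s(u,v) → fe e ∈ Av := by
    intro e he hve hne
    obtain ⟨y, hy, rfl⟩ := edge_form v e he hve
    have hyu : y ≠ u := by rintro rfl; exact hne Sym2.eq_swap
    exact Finset.mem_image_of_mem _
      (Finset.mem_erase.mpr ⟨hyu, (mem_neighborFinset _ _ _).mpr hy⟩)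
  have hmemAw : ∀ e ∈ G.edgeSet, w ∈ e → fe e ∈ Aw := by
    intro e he hwe
    obtain ⟨y, hy, rfl⟩ := edge_form w e he hwe
    exact Finset.mem_image_of_mem _ ((mem_neighborFinset _ _ _).mpr hy)
  have huw_ne : s(u,w) ≠ s(u,v) := by
    intro hEq
    rcases Sym2.eq_iff.mp hEq with ⟨-, h'⟩ | ⟨h', -⟩
    · exact hvw.ne' h'
    · exact huv.ne h'
  have hvw_ne : s(v,w) ≠ s(u,v) := by
    intro hEq
    rcases Sym2.eq_iff.mp hEq with ⟨h', -⟩ | ⟨-, h'⟩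
    · exact huv.ne h'.symm
    · exact huw.ne' h'
  have huInuw : u ∈ s(u,w) := Sym2.mem_iff.mpr (Or.inl rfl)
  have hwInuw : w ∈ s(u,w) := Sym2.mem_iff.mpr (Or.inr rfl)
  have hvInvw : v ∈ s(v,w) := Sym2.mem_iff.mpr (Or.inl rfl)
  have hwInvw : w ∈ s(v,w) := Sym2.mem_iff.mpr (Or.inr rfl)
  have hvNotInuw : v ∉ s(u,w) := by
    intro hvm
    rcases Sym2.mem_iff.mp hvm with h' | h'
    · exact huv.ne' h'
    · exact hvw.ne h'
  have huwE : s(u,w) ∈ G.edgeSet := G.mem_edgeSet.mpr huw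
  have hvwE : s(v,w) ∈ G.edgeSet := G.mem_edgeSet.mpr hvw
  -- cardinality bounds
  have hAu_card : Au.card ≤ deg G u - 1 := by
    refine le_trans Finset.card_image_le ?_
    rw [Finset.card_erase_of_mem hvu, hnd]
  have hAv_card : Av.card ≤ deg G v - 1 := by
    refine le_trans Finset.card_image_le ?_
    rw [Finset.card_erase_of_mem huNv, hnd]
  have hAw_card : Aw.card ≤ deg G w := by
    refine le_trans Finset.card_image_le ?_
    rw [hnd]
  -- Step A: the colors around u and v cover everything
  have hcover : ∀ α : Fin κ, α ∈ Au ∪ Av ∪ ({fv u} : Finset (Fin κ)) := by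
    intro α
    by_contra hα
    simp only [Finset.mem_union, Finset.mem_singleton, not_or] at hα
    obtain ⟨⟨hαu, hαv⟩, hαfu⟩ := hα
    obtain ⟨cv, hcv⟩ := pick_color (((G.neighborFinset v).image fv) ∪ Av ∪ {α}) (by
      have t1 := Finset.card_union_le (((G.neighborFinset v).image fv) ∪ Av) ({α} : Finset (Fin κ))
      have t2 := Finset.card_union_le ((G.neighborFinset v).image fv) Av
      have t3 : ((G.neighborFinset v).image fv).card ≤ deg G v := by
        refine le_trans Finset.card_image_le ?_; rw [hnd]
      have t4 : ({α} : Finset (Fin κ)).card = 1 := Finset.card_singleton α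
      omega)
    simp only [Finset.mem_union, Finset.mem_singleton, not_or] at hcv
    obtain ⟨⟨hcv1, hcv2⟩, hcv3⟩ := hcv
    refine hnot (key_extend G u v huv fv fe hcol s(u,w) huwE huw_ne
      (fe s(u,w)) α cv ?_ ?_ ?_ ?_ ?_ ?_ ?_ ?_ ?_)
    · rintro e he hne1 hne2 ⟨x, hx1, hx2⟩
      exact hcol.2.1 s(u,w) e (hG'mem _ huwE huw_ne) (hG'mem e he hne1)
        (Ne.symm hne2) ⟨x, hx2, hx1⟩
    · intro x hx _
      exact hcol.2.2 x s(u,w) (hG'mem _ huwE huw_ne) hx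
    · intro hvm; exact absurd hvm hvNotInuw
    · intro hEq
      have hmem := hmemAu s(u,w) huwE huInuw huw_ne
      rw [hEq] at hmem
      exact hαu hmem
    · intro e he hne1 _ hor hEq
      rw [hEq] at hαu hαv
      rcases hor with h' | h'
      · exact hαu (hmemAu e he h' hne1)
      · exact hαv (hmemAv e he h' hne1)
    · exact hαfu
    · exact Ne.symm hcv3
    · intro x hx hEq
      refine hcv1 ?_
      rw [hEq]
      exact Finset.mem_image_of_mem _ ((mem_neighborFinset _ _ _).mpr hx)
    · intro e he hve hne1 _ hEq
      rw [hEq] at hcv2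
      exact hcv2 (hmemAv e he hve hne1)
  -- counting: the three color sets are disjoint
  have hU : (Au ∪ Av ∪ ({fv u} : Finset (Fin κ))) = Finset.univ :=
    Finset.eq_univ_iff_forall.mpr hcover
  have hκcard : (Au ∪ Av ∪ ({fv u} : Finset (Fin κ))).card = κ := by
    rw [hU, Finset.card_univ, Fintype.card_fin]
  have hc1 : (Au ∪ Av ∪ ({fv u} : Finset (Fin κ))).card ≤ (Au ∪ Av).card + 1 := by
    refine le_trans (Finset.card_union_le _ _) ?_
    simp
  have hc2 : (Au ∪ Av).card + (Au ∩ Av).card = Au.card + Av.card :=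
    Finset.card_union_add_card_inter _ _
  have hinter : (Au ∩ Av).card = 0 := by omega
  have hAuAv : ∀ a ∈ Au, a ∉ Av := by
    intro a ha hb
    have : a ∈ Au ∩ Av := Finset.mem_inter.mpr ⟨ha, hb⟩
    rw [Finset.card_eq_zero.mp hinter] at this
    exact Finset.notMem_empty a this
  have hfu_not : fv u ∉ Au ∪ Av := by
    intro hmem
    have heq : Au ∪ Av ∪ ({fv u} : Finset (Fin κ)) = Au ∪ Av :=
      Finset.union_eq_left.mpr (Finset.singleton_subset_iff.mpr hmem)
    rw [heq] at hκcard
    omega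
  have hfuAv : fv u ∉ Av := fun hmem => hfu_not (Finset.mem_union_right _ hmem)
  -- pick a color β missing at w
  obtain ⟨β, hβ⟩ := pick_color (Aw ∪ ({fv w} : Finset (Fin κ))) (by
    have t1 := Finset.card_union_le Aw ({fv w} : Finset (Fin κ))
    have t4 : ({fv w} : Finset (Fin κ)).card = 1 := Finset.card_singleton _
    omega)
  simp only [Finset.mem_union, Finset.mem_singleton, not_or] at hβ
  obtain ⟨hβw, hβfw⟩ := hβ
  by_cases hβv : β ∈ Av
  · -- recolor uw with β, then color uv with the old color of uw
    obtain ⟨cv, hcv⟩ := pick_color (((G.neighborFinset v).image fv) ∪ Av ∪ {fe s(u,w)}) (by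
      have t1 := Finset.card_union_le (((G.neighborFinset v).image fv) ∪ Av)
        ({fe s(u,w)} : Finset (Fin κ))
      have t2 := Finset.card_union_le ((G.neighborFinset v).image fv) Av
      have t3 : ((G.neighborFinset v).image fv).card ≤ deg G v := by
        refine le_trans Finset.card_image_le ?_; rw [hnd]
      have t4 : ({fe s(u,w)} : Finset (Fin κ)).card = 1 := Finset.card_singleton _
      omega)
    simp only [Finset.mem_union, Finset.mem_singleton, not_or] at hcv
    obtain ⟨⟨hcv1, hcv2⟩, hcv3⟩ := hcv
    refine hnot (key_extend G u v huv fv fe hcol s(u,w) huwE huw_ne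
      β (fe s(u,w)) cv ?_ ?_ ?_ ?_ ?_ ?_ ?_ ?_ ?_)
    · rintro e he hne1 hne2 ⟨x, hx1, hx2⟩ hEq
      rcases Sym2.mem_iff.mp hx2 with rfl | rfl
      · rw [hEq] at hβv
        exact hAuAv _ (hmemAu e he hx1 hne1) hβv
      · rw [hEq] at hβw
        exact hβw (hmemAw e he hx1)
    · intro x hx hxv hEq
      rcases Sym2.mem_iff.mp hx with h' | h'
      · subst h'
        rw [← hEq] at hβv
        exact hfuAv hβv
      · subst h'
        exact hβfw hEq.symm
    · intro hvm; exact absurd hvm hvNotInuw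
    · intro hEq
      rw [hEq] at hβv
      exact hAuAv _ (hmemAu s(u,w) huwE huInuw huw_ne) hβv
    · intro e he hne1 hne2 hor
      rcases hor with h' | h'
      · exact hcol.2.1 s(u,w) e (hG'mem _ huwE huw_ne) (hG'mem e he hne1)
          (Ne.symm hne2) ⟨u, huInuw, h'⟩
      · intro hEq
        have : fe s(u,w) ∈ Av := by rw [hEq]; exact hmemAv e he h' hne1
        exact hAuAv _ (hmemAu s(u,w) huwE huInuw huw_ne) this
    · exact (hcol.2.2 u s(u,w) (hG'mem _ huwE huw_ne) huInuw).symm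
    · exact Ne.symm hcv3
    · intro x hx hEq
      refine hcv1 ?_
      rw [hEq]
      exact Finset.mem_image_of_mem _ ((mem_neighborFinset _ _ _).mpr hx)
    · intro e he hve hne1 _ hEq
      rw [hEq] at hcv2
      exact hcv2 (hmemAv e he hve hne1)
  · -- recolor vw with β, then color uv with the old color of vw
    obtain ⟨cv, hcv⟩ := pick_color (((G.neighborFinset v).image fv) ∪ Av ∪ {β}) (by
      have t1 := Finset.card_union_le (((G.neighborFinset v).image fv) ∪ Av)
        ({β} : Finset (Fin κ))
      have t2 := Finset.card_union_le ((G.neighborFinset v).image fv) Av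
      have t3 : ((G.neighborFinset v).image fv).card ≤ deg G v := by
        refine le_trans Finset.card_image_le ?_; rw [hnd]
      have t4 : ({β} : Finset (Fin κ)).card = 1 := Finset.card_singleton _
      omega)
    simp only [Finset.mem_union, Finset.mem_singleton, not_or] at hcv
    obtain ⟨⟨hcv1, hcv2⟩, hcv3⟩ := hcv
    refine hnot (key_extend G u v huv fv fe hcol s(v,w) hvwE hvw_ne
      β (fe s(v,w)) cv ?_ ?_ ?_ ?_ ?_ ?_ ?_ ?_ ?_)
    · rintro e he hne1 hne2 ⟨x, hx1, hx2⟩ hEq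
      rcases Sym2.mem_iff.mp hx2 with rfl | rfl
      · rw [hEq] at hβv
        exact hβv (hmemAv e he hx1 hne1)
      · rw [hEq] at hβw
        exact hβw (hmemAw e he hx1)
    · intro x hx hxv hEq
      rcases Sym2.mem_iff.mp hx with h' | h'
      · exact hxv h'
      · subst h'
        exact hβfw hEq.symm
    · intro _; exact hcv3
    · intro hEq
      rw [hEq] at hβv
      exact hβv (hmemAv s(v,w) hvwE hvInvw hvw_ne)
    · intro e he hne1 hne2 hor
      rcases hor with h' | h'
      · intro hEq
        have : fe e ∈ Av := by rw [← hEq]; exact hmemAv s(v,w) hvwE hvInvw hvw_ne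
        exact hAuAv _ (hmemAu e he h' hne1) this
      · exact hcol.2.1 s(v,w) e (hG'mem _ hvwE hvw_ne) (hG'mem e he hne1)
          (Ne.symm hne2) ⟨v, hvInvw, h'⟩
    · intro hEq
      have hmem := hmemAv s(v,w) hvwE hvInvw hvw_ne
      rw [hEq] at hmem
      exact hfuAv hmem
    · intro hEq
      have hmem := hmemAv s(v,w) hvwE hvInvw hvw_ne
      rw [hEq] at hmem
      exact hcv2 hmem
    · intro x hx hEq
      refine hcv1 ?_
      rw [hEq]
      exact Finset.mem_image_of_mem _ ((mem_neighborFinset _ _ _).mpr hx)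
    · intro e he hve hne1 _ hEq
      rw [hEq] at hcv2
      exact hcv2 (hmemAv e he hve hne1)
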